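/- If f is a right-moving local permutation with rule functions g_i (so f(x)_i = g_i(x|_{(-∞,i]})), then for every i, every y ∈ {0,1}^{(-∞,i-1]} and a ≠ b in {0,1}, g_i(y·a) ≠ g_i(y·b). -/

import Mathlib

noncomputable section

/-- The full binary shift space `{0,1}^ℤ`. -/
abbrev X : Type := ℤ → ZMod 2

instance : Group (X ≃ₜ X) where
  mul f g := g.trans f
  one := Homeomorph.refl X
  inv := Homeomorph.symm
  mul_assoc f g h := rfl
  one_mul f := Homeomorph.ext fun _ => rfl
  mul_one f := Homeomorph.ext fun _ => rfl
  inv_mul_cancel f := Homeomorph.ext fun x => f.symm_apply_apply x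

/-- The shift `σ^n`, `σ^n(x)_i = x_{i+n}`. -/
def shiftPow (n : ℤ) : X ≃ₜ X where
  toFun x i := x (i + n)
  invFun x i := x (i - n)
  left_inv x := funext fun i => congrArg x (by ring)
  right_inv x := funext fun i => congrArg x (by ring)
  continuous_toFun := continuous_pi fun i => continuous_apply (i + n)
  continuous_invFun := continuous_pi fun i => continuous_apply (i - n)

/-- The shift `σ`. -/
def shiftHomeo : X ≃ₜ X := shiftPow 1

/-- A local permutation: a self-homeomorphism fixing all coordinates outside a bounded interval. -/
def IsLocalPerm (f : X ≃ₜ X) : Prop :=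
  ∃ r : ℤ, ∀ (x : X) (i : ℤ), r ≤ |i| → f x i = x i

/-- The group `G` generated by the shift and the local permutations. -/
def Ggrp : Subgroup (X ≃ₜ X) :=
  Subgroup.closure ({shiftHomeo} ∪ {f | IsLocalPerm f})

/-- Build a homeomorphism of `X` from an involutive continuous map. -/
def mkInvHomeo (F : X → X) (h : Function.Involutive F) (hc : Continuous F) : X ≃ₜ X :=
  ⟨Function.Involutive.toPerm F h, hc, hc⟩

/-- Auxiliary configuration: left part given by `y`, a free block `u` on `[i, i+n]`,
and `0` beyond. -/
def auxPhi (i : ℤ) (n : ℕ) (y : {j : ℤ // j < i} → ZMod 2)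
    (u : Fin (n + 1) → ZMod 2) : X := fun j =>
  if h : j < i then y ⟨j, h⟩
  else if h2 : j ≤ i + n then u ⟨(j - i).toNat, by omega⟩ else 0

/-- If `f` is a right-moving local permutation with rule functions `g_i`, then each `g_i`
distinguishes the last letter: extending a left-infinite word `y` by distinct letters gives
distinct values. -/
theorem stmt14 (f : X ≃ₜ X) (hf : IsLocalPerm f)
    (g : (i : ℤ) → ({j : ℤ // j ≤ i} → ZMod 2) → ZMod 2)
    (hg : ∀ (x : X) (i : ℤ), f x i = g i fun j => x (j : ℤ))
    (i : ℤ) (y : {j : ℤ // j < i} → ZMod 2) (a b : ZMod 2) (hab : a ≠ b) :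
    g i (fun j => if h : (j : ℤ) < i then y ⟨j, h⟩ else a) ≠
      g i (fun j => if h : (j : ℤ) < i then y ⟨j, h⟩ else b) := by
  intro hcon
  obtain ⟨r, hr⟩ := hf
  -- since `ZMod 2` has only the two elements `a, b`, `g i (y·-)` is constant
  have hconst : ∀ c : ZMod 2,
      g i (fun j => if h : (j : ℤ) < i then y ⟨j, h⟩ else c) =
      g i (fun j => if h : (j : ℤ) < i then y ⟨j, h⟩ else a) := by
    intro c
    have hc : c = a ∨ c = b := (by decide : ∀ a b c : ZMod 2, a ≠ b → c = a ∨ c = b) a b c hab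
    rcases hc with rfl | rfl
    · rfl
    · exact hcon.symm
  set n : ℕ := (r - i).toNat + 1 with hn
  have hinj : Function.Injective (fun u : Fin (n + 1) → ZMod 2 =>
      fun k : Fin n => f (auxPhi i n y u) (i + 1 + k)) := by
    intro u v huv
    have hfeq : f (auxPhi i n y u) = f (auxPhi i n y v) := by
      funext j
      rcases lt_trichotomy j i with hj | rfl | hj
      · rw [hg, hg]
        congr 1
        funext j'
        have hji : (j' : ℤ) < i := lt_of_le_of_lt j'.2 hj
        simp only [auxPhi, dif_pos hji]
      · rw [hg, hg]
        have hrestr : ∀ w : Fin (n + 1) → ZMod 2,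
            g j (fun j' : {k : ℤ // k ≤ j} => auxPhi j n y w (j' : ℤ)) =
            g j (fun j' => if h : (j' : ℤ) < j then y ⟨j', h⟩ else a) := by
          intro w
          have hcoord : (fun j' : {k : ℤ // k ≤ j} => auxPhi j n y w (j' : ℤ)) =
              (fun j' : {k : ℤ // k ≤ j} => if h : (j' : ℤ) < j then y ⟨j', h⟩ else w ⟨0, by omega⟩) := by
            funext j'
            by_cases h : (j' : ℤ) < j
            · simp only [auxPhi, dif_pos h]
            · have hji : (j' : ℤ) = j := le_antisymm j'.2 (not_lt.1 h)
              have h0 : ((j' : ℤ) - j).toNat = 0 := by omega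
              simp only [auxPhi, dif_neg h, dif_pos (show (j' : ℤ) ≤ j + (n : ℤ) by omega), h0]
          rw [hcoord]
          exact hconst (w ⟨0, by omega⟩)
        rw [hrestr u, hrestr v]
      · by_cases hjn : j ≤ i + n
        · have hk := congrFun huv ⟨(j - i - 1).toNat, by omega⟩
          have hco : i + 1 + (((j - i - 1).toNat : ℕ) : ℤ) = j := by omega
          simpa only [Fin.val_mk, hco] using hk
        · have hrj : r ≤ |j| := le_trans (by omega) (le_abs_self j)
          rw [hr _ j hrj, hr _ j hrj]
          simp only [auxPhi, dif_neg (show ¬ j < i by omega),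
            dif_neg (show ¬ j ≤ i + (n : ℤ) from hjn)]
    have hPhi : auxPhi i n y u = auxPhi i n y v := f.injective hfeq
    funext k
    have h1 := congrFun hPhi (i + (k : ℕ))
    have h2 : ¬ (i + ((k : ℕ) : ℤ) < i) := by omega
    have h3 : i + ((k : ℕ) : ℤ) ≤ i + (n : ℤ) := by have := k.isLt; omega
    simp only [auxPhi, dif_neg h2, dif_pos h3] at h1
    have h4 : (⟨(i + ((k : ℕ) : ℤ) - i).toNat, by omega⟩ : Fin (n + 1)) = k := by
      ext
      show (i + ((k : ℕ) : ℤ) - i).toNat = (k : ℕ)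
      omega
    rwa [h4] at h1
  have hcard := Fintype.card_le_of_injective _ hinj
  simp only [Fintype.card_fun, Fintype.card_fin, ZMod.card] at hcard
  have := Nat.pow_lt_pow_right (show 1 < 2 by norm_num) (Nat.lt_succ_self n)
  omega
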